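/- Every reduced glue-k-expression ξ of a graph with n vertices and m edges has at most 2m + n leaves (introduce nodes). -/

import Mathlib

/-! ### `k`-labeled graphs and the basic operations on them -/

/-- A `k`-labeled graph: a simple graph together with a labeling of its vertices
by labels from `Fin k`. -/
structure LGraph (k : ℕ) where
  V : Type
  G : SimpleGraph V
  lab : V → Fin k

namespace LGraph

variable {k : ℕ}

/-- The join operation `η_{a,b}`: add all edges between vertices of label `a`
and vertices of label `b`. -/
def join (a b : Fin k) (H : LGraph k) : LGraph k where
  V := H.V
  G :=
    { Adj := fun u v =>
        H.G.Adj u v ∨ (u ≠ v ∧ ((H.lab u = a ∧ H.lab v = b) ∨ (H.lab u = b ∧ H.lab v = a)))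
      symm := by
        refine ⟨?_⟩
        intro u v h
        rcases h with h | ⟨hne, h⟩
        · exact Or.inl (H.G.adj_symm h)
        · refine Or.inr ⟨hne.symm, ?_⟩
          rcases h with ⟨h1, h2⟩ | ⟨h1, h2⟩
          · exact Or.inr ⟨h2, h1⟩
          · exact Or.inl ⟨h2, h1⟩
      loopless := by
        refine ⟨?_⟩
        intro v h
        rcases h with h | ⟨hne, _⟩
        · exact H.G.loopless.irrefl v h
        · exact hne rfl }
  lab := H.lab

/-- The relabel operation `ρ_{a→b}`: every vertex of label `a` gets label `b` instead. -/
def relabel (a b : Fin k) (H : LGraph k) : LGraph k where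
  V := H.V
  G := H.G
  lab := fun v => if H.lab v = a then b else H.lab v

/-- The fuse operation `θ_i`: replace all vertices of label `i` by a single new vertex
(represented by `none`) of label `i` whose neighbourhood is the union of their
neighbourhoods. -/
def fuse (i : Fin k) (H : LGraph k) : LGraph k where
  V := Option {v : H.V // H.lab v ≠ i}
  G :=
    { Adj := fun x y =>
        match x, y with
        | some u, some v => H.G.Adj u.1 v.1
        | some u, none => ∃ w, H.lab w = i ∧ H.G.Adj u.1 w
        | none, some v => ∃ w, H.lab w = i ∧ H.G.Adj w v.1
        | none, none => False
      symm := by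
        refine ⟨?_⟩
        rintro (_ | u) (_ | v) h
        · exact h
        · obtain ⟨w, hw, ha⟩ := h
          exact ⟨w, hw, ha.symm⟩
        · obtain ⟨w, hw, ha⟩ := h
          exact ⟨w, hw, ha.symm⟩
        · exact H.G.adj_symm h
      loopless := by
        refine ⟨?_⟩
        rintro (_ | v) h
        · exact h
        · exact H.G.loopless.irrefl v.1 h }
  lab := fun x =>
    match x with
    | some u => H.lab u.1
    | none => i

/-- Disjoint union `H1 ⊕ H2` of two `k`-labeled graphs. -/
def union (H1 H2 : LGraph k) : LGraph k where
  V := H1.V ⊕ H2.V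
  G := H1.G ⊕g H2.G
  lab := Sum.elim H1.lab H2.lab

/-- Label-preserving isomorphism of `k`-labeled graphs. -/
def LIso (H1 H2 : LGraph k) : Prop :=
  ∃ e : H1.G ≃g H2.G, ∀ v, H2.lab (e v) = H1.lab v

/-- The occurrence of the join operator `η_{a,b}` applied to `H` is not useless,
i.e. it creates at least one new edge. -/
def joinUseful (a b : Fin k) (H : LGraph k) : Prop :=
  ∃ u v : H.V, u ≠ v ∧ H.lab u = a ∧ H.lab v = b ∧ ¬ H.G.Adj u v

/-- The occurrence of the fuse operator `θ_i` applied to `H` is not useless,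
i.e. `H` has at least two vertices of label `i`. -/
def fuseUseful (i : Fin k) (H : LGraph k) : Prop :=
  ∃ u v : H.V, u ≠ v ∧ H.lab u = i ∧ H.lab v = i

/-- The occurrence of a relabel operator `ρ_{a→b}` applied to `H` is not useless,
i.e. `H` has a vertex of label `a`. -/
def relabelUseful (a : Fin k) (H : LGraph k) : Prop :=
  ∃ v : H.V, H.lab v = a

/-- `relabelSeq i [a₁, …, a_q] H = ρ_{a₁→i}(⋯(ρ_{a_q→i}(H))⋯)`. -/
def relabelSeq (i : Fin k) : List (Fin k) → LGraph k → LGraph k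
  | [], H => H
  | a :: as, H => relabel a i (relabelSeq i as H)

/-- None of the relabel operators in `relabelSeq i as H` is useless (this includes
that none of them has the form `ρ_{a→a}`). -/
def relabelSeqUseful (i : Fin k) : List (Fin k) → LGraph k → Prop
  | [], _ => True
  | a :: as, H => relabelSeqUseful i as H ∧ a ≠ i ∧ relabelUseful a (relabelSeq i as H)

end LGraph

/-! ### Glue-`k`-expressions -/

/-- A `k`-labeled graph with titled vertices: vertices are natural-number titles
(titles determine vertex identity), together with a finite vertex set, a finite edge
set and a labeling (only meaningful on `verts`). -/
structure TGraph (k : ℕ) where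
  verts : Finset ℕ
  edges : Finset (Sym2 ℕ)
  lab : ℕ → Fin k

/-- The underlying simple graph (on the vertex set) of a titled `k`-labeled graph. -/
def TGraph.toSG {k : ℕ} (T : TGraph k) : SimpleGraph {v // v ∈ T.verts} where
  Adj u v := u ≠ v ∧ s(u.1, v.1) ∈ T.edges
  symm := by
    refine ⟨?_⟩
    intro u v h
    refine ⟨h.1.symm, ?_⟩
    rw [Sym2.eq_swap]
    exact h.2
  loopless := ⟨fun v h => h.1 rfl⟩

/-- Two titled `k`-labeled graphs are glueable: every shared vertex has the same label
in both graphs and is the unique vertex of its label in each of them. -/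
def Glueable {k : ℕ} (T1 T2 : TGraph k) : Prop :=
  ∀ v ∈ T1.verts ∩ T2.verts,
    T1.lab v = T2.lab v ∧
    (∀ w ∈ T1.verts, T1.lab w = T1.lab v → w = v) ∧
    (∀ w ∈ T2.verts, T2.lab w = T2.lab v → w = v)

/-- A glue-`k`-expression: introduce a titled vertex, join, relabel, glue. -/
inductive GlueExpr (k : ℕ) where
  | intro (v : ℕ) (i : Fin k)
  | join (i j : Fin k) (ξ : GlueExpr k)
  | relabel (i j : Fin k) (ξ : GlueExpr k)
  | glue (ξ1 ξ2 : GlueExpr k)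

namespace GlueExpr

variable {k : ℕ}

/-- The titled `k`-labeled graph `G^ξ` obtained by evaluating a glue-`k`-expression. -/
def eval : GlueExpr k → TGraph k
  | .intro v i => ⟨{v}, ∅, fun _ => i⟩
  | .join i j ξ =>
      let T := ξ.eval
      ⟨T.verts,
       T.edges ∪
         (((T.verts ×ˢ T.verts).filter
            (fun p => p.1 ≠ p.2 ∧ T.lab p.1 = i ∧ T.lab p.2 = j)).image
            (fun p => s(p.1, p.2))),
       T.lab⟩
  | .relabel i j ξ =>
      let T := ξ.eval
      ⟨T.verts, T.edges, fun v => if T.lab v = i then j else T.lab v⟩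
  | .glue ξ1 ξ2 =>
      let T1 := ξ1.eval
      let T2 := ξ2.eval
      ⟨T1.verts ∪ T2.verts, T1.edges ∪ T2.edges,
       fun v => if v ∈ T1.verts then T1.lab v else T2.lab v⟩

/-- Well-formedness of a glue-`k`-expression: joins and relabels use two distinct
labels, and every glue node is applied to two glueable graphs. -/
def WF : GlueExpr k → Prop
  | .intro _ _ => True
  | .join i j ξ => i ≠ j ∧ ξ.WF
  | .relabel i j ξ => i ≠ j ∧ ξ.WF
  | .glue ξ1 ξ2 => ξ1.WF ∧ ξ2.WF ∧ Glueable ξ1.eval ξ2.eval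

/-- A glue-`k`-expression is *reduced* if it contains no useless nodes and moreover:
(1) no join `η_{i,j}` is applied to a graph already containing an edge between a
vertex of label `i` and a vertex of label `j`; (2) the two graphs at every glue node
are edge-disjoint; (3) every shared vertex at a glue node has an incident edge in both
glued graphs. -/
def Reduced : GlueExpr k → Prop
  | .intro _ _ => True
  | .join i j ξ => ξ.Reduced ∧
      -- the join is not useless: it creates at least one new edge
      (∃ u ∈ ξ.eval.verts, ∃ v ∈ ξ.eval.verts,
        u ≠ v ∧ ξ.eval.lab u = i ∧ ξ.eval.lab v = j ∧ s(u, v) ∉ ξ.eval.edges) ∧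
      -- property (1): no already existing edge between labels `i` and `j`
      (∀ u ∈ ξ.eval.verts, ∀ v ∈ ξ.eval.verts,
        ξ.eval.lab u = i → ξ.eval.lab v = j → s(u, v) ∉ ξ.eval.edges)
  | .relabel i _ ξ => ξ.Reduced ∧
      -- the relabel is not useless: some vertex has label `i`
      (∃ v ∈ ξ.eval.verts, ξ.eval.lab v = i)
  | .glue ξ1 ξ2 => ξ1.Reduced ∧ ξ2.Reduced ∧
      -- property (2): the glued graphs are edge-disjoint
      ξ1.eval.edges ∩ ξ2.eval.edges = ∅ ∧
      -- property (3): every shared vertex has an incident edge on both sides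
      (∀ v ∈ ξ1.eval.verts ∩ ξ2.eval.verts,
        (∃ e ∈ ξ1.eval.edges, v ∈ e) ∧ (∃ e ∈ ξ2.eval.edges, v ∈ e))

/-- The number of leaves (introduce nodes) of a glue-`k`-expression. -/
def leafCount : GlueExpr k → ℕ
  | .intro _ _ => 1
  | .join _ _ ξ => ξ.leafCount
  | .relabel _ _ ξ => ξ.leafCount
  | .glue ξ1 ξ2 => ξ1.leafCount + ξ2.leafCount

/-- The number of nodes of the parse tree of a glue-`k`-expression. -/
def nodeCount : GlueExpr k → ℕ
  | .intro _ _ => 1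
  | .join _ _ ξ => ξ.nodeCount + 1
  | .relabel _ _ ξ => ξ.nodeCount + 1
  | .glue ξ1 ξ2 => ξ1.nodeCount + ξ2.nodeCount + 1

end GlueExpr

open Finset in
/-- Degree of a title in a titled graph. -/
def TGraph.deg {k : ℕ} (T : TGraph k) (v : ℕ) : ℕ :=
  (T.edges.filter (fun e => v ∈ e)).card

open Finset in
/-- Weight of a titled graph: each vertex contributes `max 1 deg`. -/
def TGraph.weight {k : ℕ} (T : TGraph k) : ℕ :=
  ∑ v ∈ T.verts, max 1 (T.deg v)

lemma TGraph.deg_mono {k : ℕ} {T1 T2 : TGraph k} (h : T1.edges ⊆ T2.edges) (v : ℕ) :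
    T1.deg v ≤ T2.deg v :=
  Finset.card_le_card (Finset.filter_subset_filter _ h)

lemma TGraph.weight_mono {k : ℕ} {T1 T2 : TGraph k} (hv : T1.verts = T2.verts)
    (he : T1.edges ⊆ T2.edges) : T1.weight ≤ T2.weight := by
  unfold TGraph.weight
  rw [hv]
  exact Finset.sum_le_sum fun v _ => max_le_max le_rfl (TGraph.deg_mono he v)

lemma leafCount_le_weight {k : ℕ} (ξ : GlueExpr k) (hred : ξ.Reduced) :
    ξ.leafCount ≤ ξ.eval.weight := by
  induction ξ with
  | intro v i =>
      simp [GlueExpr.leafCount, GlueExpr.eval, TGraph.weight]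
  | join i j ξ ih =>
      have h1 : ξ.leafCount ≤ ξ.eval.weight := ih hred.1
      refine h1.trans (TGraph.weight_mono rfl ?_)
      exact Finset.subset_union_left
  | relabel i j ξ ih =>
      exact ih hred.1
  | glue ξ1 ξ2 ih1 ih2 =>
      obtain ⟨hr1, hr2, hdisj, hsh⟩ := hred
      have h1 := ih1 hr1
      have h2 := ih2 hr2
      set T1 := ξ1.eval with hT1
      set T2 := ξ2.eval with hT2
      have key : T1.weight + T2.weight ≤ (GlueExpr.glue ξ1 ξ2).eval.weight := by
        set T : TGraph k := (GlueExpr.glue ξ1 ξ2).eval with hT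
        have hverts : T.verts = T1.verts ∪ T2.verts := rfl
        have hedges : T.edges = T1.edges ∪ T2.edges := rfl
        -- pointwise facts
        have hdeg1 : ∀ v, T1.deg v ≤ T.deg v :=
          TGraph.deg_mono (by rw [hedges]; exact Finset.subset_union_left)
        have hdeg2 : ∀ v, T2.deg v ≤ T.deg v :=
          TGraph.deg_mono (by rw [hedges]; exact Finset.subset_union_right)
        have hdegadd : ∀ v, T.deg v = T1.deg v + T2.deg v := by
          intro v
          unfold TGraph.deg
          rw [hedges, Finset.filter_union]
          apply Finset.card_union_of_disjoint
          refine Finset.disjoint_left.mpr fun e he1 he2 => ?_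
          have : e ∈ T1.edges ∩ T2.edges :=
            Finset.mem_inter.mpr ⟨Finset.mem_of_mem_filter _ he1,
              Finset.mem_of_mem_filter _ he2⟩
          rw [hdisj] at this
          exact absurd this (Finset.notMem_empty e)
        have hshared : ∀ v ∈ T1.verts ∩ T2.verts,
            max 1 (T1.deg v) + max 1 (T2.deg v) ≤ max 1 (T.deg v) := by
          intro v hv
          obtain ⟨⟨e1, he1, hve1⟩, ⟨e2, he2, hve2⟩⟩ := hsh v hv
          have hd1 : 1 ≤ T1.deg v := Finset.card_pos.mpr
            ⟨e1, Finset.mem_filter.mpr ⟨he1, hve1⟩⟩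
          have hd2 : 1 ≤ T2.deg v := Finset.card_pos.mpr
            ⟨e2, Finset.mem_filter.mpr ⟨he2, hve2⟩⟩
          have := hdegadd v
          omega
        -- split sums
        unfold TGraph.weight
        rw [hverts]
        have split2 : T2.verts = (T1.verts ∩ T2.verts) ∪ (T2.verts \ T1.verts) := by
          ext x
          simp only [Finset.mem_union, Finset.mem_inter, Finset.mem_sdiff]
          tauto
        have hunion : T1.verts ∪ T2.verts = T1.verts ∪ (T2.verts \ T1.verts) := by
          ext x
          simp only [Finset.mem_union, Finset.mem_sdiff]
          tauto
        have eq2 : ∑ v ∈ T2.verts, max 1 (T2.deg v)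
            = ∑ v ∈ T1.verts ∩ T2.verts, max 1 (T2.deg v)
              + ∑ v ∈ T2.verts \ T1.verts, max 1 (T2.deg v) := by
          conv_lhs => rw [split2]
          exact Finset.sum_union (by
            refine Finset.disjoint_left.mpr fun x hx hx2 => ?_
            simp only [Finset.mem_inter] at hx
            simp only [Finset.mem_sdiff] at hx2
            exact hx2.2 hx.1)
        have eqU : ∑ v ∈ T1.verts ∪ T2.verts, max 1 (T.deg v)
            = ∑ v ∈ T1.verts, max 1 (T.deg v)
              + ∑ v ∈ T2.verts \ T1.verts, max 1 (T.deg v) := by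
          conv_lhs => rw [hunion]
          exact Finset.sum_union Finset.disjoint_sdiff
        rw [eq2, eqU]
        have hA : ∑ v ∈ T1.verts, max 1 (T1.deg v)
            + ∑ v ∈ T1.verts ∩ T2.verts, max 1 (T2.deg v)
            ≤ ∑ v ∈ T1.verts, max 1 (T.deg v) := by
          have split1 : T1.verts = (T1.verts \ T2.verts) ∪ (T1.verts ∩ T2.verts) := by
            ext x
            simp only [Finset.mem_union, Finset.mem_inter, Finset.mem_sdiff]
            tauto
          have hd : Disjoint (T1.verts \ T2.verts) (T1.verts ∩ T2.verts) := by
            refine Finset.disjoint_left.mpr fun x hx hx2 => ?_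
            simp only [Finset.mem_sdiff] at hx
            simp only [Finset.mem_inter] at hx2
            exact hx.2 hx2.2
          have e1 : ∑ v ∈ T1.verts, max 1 (T1.deg v)
              = ∑ v ∈ T1.verts \ T2.verts, max 1 (T1.deg v)
                + ∑ v ∈ T1.verts ∩ T2.verts, max 1 (T1.deg v) := by
            conv_lhs => rw [split1]
            exact Finset.sum_union hd
          have e2 : ∑ v ∈ T1.verts, max 1 (T.deg v)
              = ∑ v ∈ T1.verts \ T2.verts, max 1 (T.deg v)
                + ∑ v ∈ T1.verts ∩ T2.verts, max 1 (T.deg v) := by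
            conv_lhs => rw [split1]
            exact Finset.sum_union hd
          have p1 : ∑ v ∈ T1.verts \ T2.verts, max 1 (T1.deg v)
              ≤ ∑ v ∈ T1.verts \ T2.verts, max 1 (T.deg v) :=
            Finset.sum_le_sum fun v _ => max_le_max le_rfl (hdeg1 v)
          have p2 : ∑ v ∈ T1.verts ∩ T2.verts, max 1 (T1.deg v)
              + ∑ v ∈ T1.verts ∩ T2.verts, max 1 (T2.deg v)
              ≤ ∑ v ∈ T1.verts ∩ T2.verts, max 1 (T.deg v) := by
            rw [← Finset.sum_add_distrib]
            exact Finset.sum_le_sum fun v hv => hshared v hv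
          omega
        have hB : ∑ v ∈ T2.verts \ T1.verts, max 1 (T2.deg v)
            ≤ ∑ v ∈ T2.verts \ T1.verts, max 1 (T.deg v) :=
          Finset.sum_le_sum fun v _ => max_le_max le_rfl (hdeg2 v)
        omega
      calc ξ1.leafCount + ξ2.leafCount ≤ T1.weight + T2.weight := Nat.add_le_add h1 h2
        _ ≤ _ := key

lemma TGraph.weight_le {k : ℕ} (T : TGraph k) :
    T.weight ≤ 2 * T.edges.card + T.verts.card := by
  have h1 : T.weight ≤ (∑ v ∈ T.verts, T.deg v) + T.verts.card := by
    unfold TGraph.weight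
    calc ∑ v ∈ T.verts, max 1 (T.deg v) ≤ ∑ v ∈ T.verts, (T.deg v + 1) :=
        Finset.sum_le_sum fun v _ => by omega
      _ = (∑ v ∈ T.verts, T.deg v) + T.verts.card := by
        rw [Finset.sum_add_distrib, Finset.sum_const, smul_eq_mul, mul_one]
  have h2 : ∑ v ∈ T.verts, T.deg v ≤ 2 * T.edges.card := by
    have : ∑ v ∈ T.verts, T.deg v
        = ∑ e ∈ T.edges, (T.verts.filter (fun v => v ∈ e)).card := by
      unfold TGraph.deg
      simp only [Finset.card_filter]
      exact Finset.sum_comm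
    rw [this]
    calc ∑ e ∈ T.edges, (T.verts.filter (fun v => v ∈ e)).card
        ≤ ∑ e ∈ T.edges, 2 := by
          refine Finset.sum_le_sum fun e _ => ?_
          induction e with
          | _ a b =>
            have hsub : T.verts.filter (fun v => v ∈ s(a, b)) ⊆ {a, b} := by
              intro x hx
              have := (Finset.mem_filter.mp hx).2
              rw [Sym2.mem_iff] at this
              simp only [Finset.mem_insert, Finset.mem_singleton]
              exact this
            exact (Finset.card_le_card hsub).trans
              ((Finset.card_insert_le a {b}).trans (by simp))
      _ = 2 * T.edges.card := by rw [Finset.sum_const, smul_eq_mul, mul_comm]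
  omega

/-- Every reduced glue-`k`-expression of a graph with `n` vertices
and `m` edges has at most `2m + n` leaves. -/
theorem leafCount_le_of_reduced {k : ℕ} (ξ : GlueExpr k)
    (hwf : ξ.WF) (hred : ξ.Reduced) :
    ξ.leafCount ≤ 2 * ξ.eval.edges.card + ξ.eval.verts.card :=
  (leafCount_le_weight ξ hred).trans (TGraph.weight_le _)
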